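/- The non-overlapping group smoothed ℓ0 function r(x) = Σ_b (1 − exp(−(Σ_{i∈G_b} xᵢ²)/(2σ²))), where the groups G_b partition the coordinates into disjoint blocks of size n_v, is convex on the box {x : ‖x‖_∞ ≤ x_m} whenever σ ≥ x_m·√(n_v). -/

import Mathlib

open Real Finset Set

lemma conv1d (A B C σ : ℝ) (hσ : 0 < σ)
    (hcs : ∀ t ∈ Set.Icc (0:ℝ) 1, (B + 2*C*t)^2 ≤ 4*σ^2*C) :
    ConvexOn ℝ (Set.Icc (0:ℝ) 1)
      (fun t => 1 - Real.exp (-(A + B*t + C*t^2) / (2*σ^2))) := by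
  set g : ℝ → ℝ := fun t => -(A + B*t + C*t^2) / (2*σ^2) with hgdef
  have hσ2 : (0:ℝ) < 2*σ^2 := by positivity
  have hg : ∀ t : ℝ, HasDerivAt g (-(B + 2*C*t)/(2*σ^2)) t := by
    intro t
    have h1 : HasDerivAt (fun t : ℝ => A + B*t + C*t^2) (B + 2*C*t) t := by
      have := (((hasDerivAt_id t).const_mul B).const_add A).add
        ((hasDerivAt_pow 2 t).const_mul C)
      exact this.congr_deriv (by simp; ring)
    exact h1.neg.div_const (2*σ^2)
  have hf : ∀ t : ℝ, HasDerivAt (fun t => 1 - Real.exp (g t))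
      ((B + 2*C*t)/(2*σ^2) * Real.exp (g t)) t := by
    intro t
    have := ((hg t).exp).const_sub 1
    exact this.congr_deriv (by ring)
  have hf' : ∀ t : ℝ, HasDerivAt (fun t => (B + 2*C*t)/(2*σ^2) * Real.exp (g t))
      (Real.exp (g t) * (2*C/(2*σ^2) - ((B + 2*C*t)/(2*σ^2))^2)) t := by
    intro t
    have h1 : HasDerivAt (fun t : ℝ => (B + 2*C*t)/(2*σ^2)) (2*C/(2*σ^2)) t := by
      have : HasDerivAt (fun t : ℝ => B + 2*C*t) (2*C) t := by
        simpa using ((hasDerivAt_id t).const_mul (2*C)).const_add B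
      simpa using this.div_const (2*σ^2)
    have := h1.mul (hg t).exp
    exact this.congr_deriv (by ring)
  apply convexOn_of_hasDerivWithinAt2_nonneg (convex_Icc 0 1)
    (f' := fun t => (B + 2*C*t)/(2*σ^2) * Real.exp (g t))
    (f'' := fun t => Real.exp (g t) * (2*C/(2*σ^2) - ((B + 2*C*t)/(2*σ^2))^2))
  · exact Continuous.continuousOn (by continuity)
  · exact fun x _ => (hf x).hasDerivWithinAt
  · exact fun x _ => (hf' x).hasDerivWithinAt
  · intro x hx
    rw [interior_Icc] at hx
    have hcs' := hcs x ⟨le_of_lt hx.1, le_of_lt hx.2⟩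
    have hex := Real.exp_pos (g x)
    have key : 0 ≤ 2*C/(2*σ^2) - ((B + 2*C*x)/(2*σ^2))^2 := by
      rw [sub_nonneg, div_pow, div_le_div_iff₀ (by positivity) hσ2]
      nlinarith [sq_nonneg σ]
    positivity

lemma group_ineq (n : ℕ) (σ : ℝ) (hσ : 0 < σ) (u v : ℕ → ℝ)
    (hu : ∑ i ∈ Finset.range n, u i ^ 2 ≤ σ^2)
    (hv : ∑ i ∈ Finset.range n, v i ^ 2 ≤ σ^2)
    (a b : ℝ) (ha : 0 ≤ a) (hb : 0 ≤ b) (hab : a + b = 1) :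
    1 - Real.exp (-(∑ i ∈ Finset.range n, (a * u i + b * v i)^2) / (2*σ^2)) ≤
      a * (1 - Real.exp (-(∑ i ∈ Finset.range n, u i ^ 2) / (2*σ^2))) +
      b * (1 - Real.exp (-(∑ i ∈ Finset.range n, v i ^ 2) / (2*σ^2))) := by
  set A : ℝ := ∑ i ∈ Finset.range n, u i ^ 2 with hA
  set B : ℝ := 2 * ∑ i ∈ Finset.range n, u i * (v i - u i) with hB
  set C : ℝ := ∑ i ∈ Finset.range n, (v i - u i) ^ 2 with hC
  have expand : ∀ t : ℝ, ∑ i ∈ Finset.range n, (u i + t*(v i - u i))^2 = A + B*t + C*t^2 := by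
    intro t
    have hpt : ∀ i, (u i + t*(v i - u i))^2
        = u i ^ 2 + (t*2) * (u i * (v i - u i)) + t^2 * (v i - u i)^2 := fun i => by ring
    rw [Finset.sum_congr rfl fun i _ => hpt i, Finset.sum_add_distrib, Finset.sum_add_distrib,
      ← Finset.mul_sum, ← Finset.mul_sum, hA, hB, hC]
    ring
  have hPle : ∀ t ∈ Set.Icc (0:ℝ) 1, A + B*t + C*t^2 ≤ σ^2 := by
    intro t ht
    rw [← expand t]
    have step : ∑ i ∈ Finset.range n, (u i + t*(v i - u i))^2 ≤
        (1-t) * A + t * (∑ i ∈ Finset.range n, v i ^ 2) := by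
      rw [hA, Finset.mul_sum, Finset.mul_sum, ← Finset.sum_add_distrib]
      refine Finset.sum_le_sum fun i _ => ?_
      nlinarith [sq_nonneg (u i - v i), ht.1, ht.2, mul_nonneg ht.1 (sub_nonneg.2 ht.2),
        sq_nonneg (u i + t*(v i - u i))]
    calc _ ≤ (1-t) * A + t * (∑ i ∈ Finset.range n, v i ^ 2) := step
      _ ≤ (1-t) * σ^2 + t * σ^2 := by
          have h1 : 0 ≤ 1 - t := by linarith [ht.2]
          gcongr
          exact ht.1
      _ = σ^2 := by ring
  have hcs : ∀ t ∈ Set.Icc (0:ℝ) 1, (B + 2*C*t)^2 ≤ 4*σ^2*C := by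
    intro t ht
    have hBlin : B + 2*C*t = 2 * ∑ i ∈ Finset.range n, (u i + t*(v i - u i)) * (v i - u i) := by
      have hpt : ∀ i, (u i + t*(v i - u i)) * (v i - u i)
          = u i * (v i - u i) + t * (v i - u i)^2 := fun i => by ring
      rw [Finset.sum_congr rfl fun i _ => hpt i, Finset.sum_add_distrib, ← Finset.mul_sum,
        hB, hC]
      ring
    have hCS := Finset.sum_mul_sq_le_sq_mul_sq (Finset.range n)
      (fun i => u i + t*(v i - u i)) (fun i => v i - u i)
    have hP := hPle t ht
    rw [← expand t] at hP
    have hC0 : 0 ≤ C := Finset.sum_nonneg fun i _ => sq_nonneg _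
    rw [hBlin]
    rw [hC] at hC0 ⊢
    nlinarith [Finset.sum_nonneg (fun i (_ : i ∈ Finset.range n) => sq_nonneg (v i - u i))]
  have hconv := conv1d A B C σ hσ hcs
  have h01 : (0:ℝ) ∈ Set.Icc (0:ℝ) 1 := by constructor <;> norm_num
  have h11 : (1:ℝ) ∈ Set.Icc (0:ℝ) 1 := by constructor <;> norm_num
  have h0 := hconv.2 h01 h11 ha hb hab
  rw [show a • (0:ℝ) + b • (1:ℝ) = b by simp [smul_eq_mul]] at h0
  have hkey : 1 - Real.exp (-(A + B*b + C*b^2)/(2*σ^2)) ≤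
      a * (1 - Real.exp (-(A + B*0 + C*0^2)/(2*σ^2))) +
      b * (1 - Real.exp (-(A + B*1 + C*1^2)/(2*σ^2))) := h0
  have e1 : A + B*b + C*b^2 = ∑ i ∈ Finset.range n, (a * u i + b * v i)^2 := by
    rw [← expand b]
    refine Finset.sum_congr rfl fun i _ => ?_
    have : a = 1 - b := by linarith
    rw [this]; ring
  have e2 : A + B*0 + C*0^2 = ∑ i ∈ Finset.range n, u i ^ 2 := by
    rw [← expand 0]; exact Finset.sum_congr rfl fun i _ => by ring
  have e3 : A + B*1 + C*1^2 = ∑ i ∈ Finset.range n, v i ^ 2 := by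
    rw [← expand 1]; exact Finset.sum_congr rfl fun i _ => by ring
  rw [e1, e2, e3] at hkey
  exact hkey

theorem nosl0_convexOn_box (n_g n_v : ℕ) (hnv : 1 ≤ n_v) (σ xm : ℝ) (hσ : 0 < σ)
    (hxm : 0 ≤ xm) (h : σ ≥ xm * Real.sqrt n_v) :
    ConvexOn ℝ {x : ℕ → ℝ | ∀ i < n_g * n_v, |x i| ≤ xm}
      (fun x : ℕ → ℝ => ∑ b ∈ Finset.range n_g,
        (1 - Real.exp (-(∑ i ∈ Finset.range n_v, x (b * n_v + i) ^ 2) / (2 * σ ^ 2)))) := by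
  have hbound : xm^2 * n_v ≤ σ^2 := by
    have h1 : (xm * Real.sqrt n_v)^2 ≤ σ^2 := by
      apply sq_le_sq' _ h
      have : 0 ≤ xm * Real.sqrt n_v := mul_nonneg hxm (Real.sqrt_nonneg _)
      linarith
    rwa [mul_pow, Real.sq_sqrt (Nat.cast_nonneg n_v)] at h1
  have hsum : ∀ x : ℕ → ℝ, x ∈ {x : ℕ → ℝ | ∀ i < n_g * n_v, |x i| ≤ xm} →
      ∀ b < n_g, ∑ i ∈ Finset.range n_v, x (b * n_v + i) ^ 2 ≤ σ^2 := by
    intro x hx b hb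
    have step : ∑ i ∈ Finset.range n_v, x (b * n_v + i) ^ 2 ≤
        ∑ _i ∈ Finset.range n_v, xm^2 := by
      refine Finset.sum_le_sum fun i hi => ?_
      have hi' : i < n_v := Finset.mem_range.1 hi
      have hlt : b * n_v + i < n_g * n_v := by
        calc b * n_v + i < b * n_v + n_v := by omega
          _ = (b+1) * n_v := by ring
          _ ≤ n_g * n_v := Nat.mul_le_mul_right _ (by omega)
      have := hx _ hlt
      exact sq_le_sq' (by linarith [abs_nonneg (x (b*n_v+i)), neg_abs_le (x (b*n_v+i))]) (le_trans (le_abs_self _) this)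
    calc _ ≤ ∑ _i ∈ Finset.range n_v, xm^2 := step
      _ = xm^2 * n_v := by simp [mul_comm]
      _ ≤ σ^2 := hbound
  constructor
  · intro x hx y hy a b ha hb hab i hi
    have h1 := hx i hi
    have h2 := hy i hi
    calc |(a • x + b • y) i| = |a * x i + b * y i| := by simp [smul_eq_mul]
      _ ≤ |a * x i| + |b * y i| := abs_add_le _ _
      _ = a * |x i| + b * |y i| := by rw [abs_mul, abs_mul, abs_of_nonneg ha, abs_of_nonneg hb]
      _ ≤ a * xm + b * xm := by gcongr
      _ = xm := by rw [← add_mul, hab, one_mul]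
  · intro x hx y hy a b ha hb hab
    simp only [Pi.add_apply, Pi.smul_apply, smul_eq_mul]
    rw [Finset.mul_sum, Finset.mul_sum, ← Finset.sum_add_distrib]
    refine Finset.sum_le_sum fun c hc => ?_
    have hc' : c < n_g := Finset.mem_range.1 hc
    have hu := hsum x hx c hc'
    have hv := hsum y hy c hc'
    exact group_ineq n_v σ hσ (fun i => x (c * n_v + i)) (fun i => y (c * n_v + i))
      hu hv a b ha hb hab
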